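/- The class 𝒦 is closed under taking extensions with cyclic kernel: if 1 → A → G → H → 1 is a short exact sequence of groups with A cyclic and H ∈ 𝒦, then G ∈ 𝒦. -/

import Mathlib

open scoped ComplexConjugate

noncomputable section

/-- `l²(X)`, the Hilbert space of square-summable complex functions on `X`. -/
abbrev l2 (X : Type*) : Type _ := lp (fun _ : X => ℂ) 2

/-- A (normalized) multiplier on a discrete group `G`: a `U(1)`-valued 2-cocycle. -/
def IsMultiplier {G : Type*} [Group G] (σ : G → G → ℂ) : Prop :=
  (∀ g h, ‖σ g h‖ = 1) ∧
  (∀ a b c, σ b c * σ a (b * c) = σ (a * b) c * σ a b) ∧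
  (∀ g, σ 1 g = 1) ∧ (∀ g, σ g 1 = 1)

/-- `A` acts on `l²(G)^d` (realized as `l²(G × Fin d)`) as the matrix over the twisted
group algebra with coefficient matrices `a g` supported in the finite set `T`, i.e.
`(Af)(x) = ∑_h a(xh⁻¹) σ(xh⁻¹,h) f(h) = ∑_{g∈T} a(g) σ(g,g⁻¹x) f(g⁻¹x)`. -/
def ActsAsTwisted {G : Type*} [Group G] (σ : G → G → ℂ) (d : ℕ) (T : Finset G)
    (a : G → Matrix (Fin d) (Fin d) ℂ)
    (A : l2 (G × Fin d) →L[ℂ] l2 (G × Fin d)) : Prop :=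
  (∀ g, g ∉ T → a g = 0) ∧
  ∀ (f : l2 (G × Fin d)) (x : G) (i : Fin d),
    A f (x, i) = ∑ g ∈ T, ∑ j, a g i j * σ g (g⁻¹ * x) * f (g⁻¹ * x, j)

/-- `lam` is an eigenvalue of the bounded operator `A` on `l²(X)`. -/
def HasL2Eigenvalue {X : Type*} (A : l2 X →L[ℂ] l2 X) (lam : ℂ) : Prop :=
  ∃ f : l2 X, f ≠ 0 ∧ A f = lam • f

/-- The `σ`-multiplier algebraic eigenvalue property: every matrix over the twisted group
algebra `ℚ̄(G,σ)` acting on `l²(G)^d` has only algebraic eigenvalues. -/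
def HasMAEP (G : Type*) [Group G] (σ : G → G → ℂ) : Prop :=
  ∀ (d : ℕ) (T : Finset G) (a : G → Matrix (Fin d) (Fin d) ℂ),
    (∀ g i j, IsAlgebraic ℚ (a g i j)) →
    ∀ A : l2 (G × Fin d) →L[ℂ] l2 (G × Fin d), ActsAsTwisted σ d T a A →
    ∀ lam : ℂ, HasL2Eigenvalue A lam → IsAlgebraic ℚ lam

/-- The (untwisted) algebraic eigenvalue property. -/
def HasAEP (G : Type*) [Group G] : Prop := HasMAEP G fun _ _ => 1

/-- A discrete group is amenable if there is a left-invariant mean on `l∞(G)`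
(realized as the bounded functions `G →ᵇ ℝ` for the discrete topology). -/
def Amenable (G : Type*) [Group G] : Prop :=
  letI : TopologicalSpace G := ⊥
  haveI : DiscreteTopology G := ⟨rfl⟩
  ∃ m : BoundedContinuousFunction G ℝ →ₗ[ℝ] ℝ,
    (∀ f : BoundedContinuousFunction G ℝ, (∀ x, 0 ≤ f x) → 0 ≤ m f) ∧
    m (BoundedContinuousFunction.const G 1) = 1 ∧
    ∀ (g : G) (f : BoundedContinuousFunction G ℝ),
      m (f.compContinuous ⟨fun x => g * x, continuous_of_discreteTopology⟩) = m f

universe u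

/-- The class `𝒦`: the smallest class of groups containing all free groups and all
amenable groups, closed under directed unions and extensions with amenable quotient
(and under isomorphism). -/
inductive InClassK : ∀ (G : Type u) [Group G], Prop where
  | free : ∀ (G : Type u) [Group G], IsFreeGroup G → InClassK G
  | amenable : ∀ (G : Type u) [Group G], Amenable G → InClassK G
  | directedUnion : ∀ (G : Type u) [Group G] (S : Set (Subgroup G)),
      DirectedOn (· ≤ ·) S → sSup S = ⊤ →
      (∀ H ∈ S, InClassK ↥H) → InClassK G
  | extension : ∀ (G : Type u) [Group G] (N : Subgroup G) [N.Normal],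
      InClassK ↥N → Amenable (G ⧸ N) → InClassK G
  | iso : ∀ (G H : Type u) [Group G] [Group H], G ≃* H → InClassK G → InClassK H



section CyclicExtAux

open Filter Topology

namespace CyclicExtAux

/-- Average of the first `n+1` values of `φ` at nonnegative integers. -/
def iavg (φ : ℤ → ℝ) (n : ℕ) : ℝ := (∑ k ∈ Finset.range (n + 1), φ k) / (n + 1)

lemma iavg_abs_le {φ : ℤ → ℝ} {C : ℝ} (hC : ∀ k : ℤ, |φ k| ≤ C) (n : ℕ) :
    |iavg φ n| ≤ C := by
  have hpos : (0:ℝ) < (n:ℝ) + 1 := by positivity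
  have h1 : |∑ k ∈ Finset.range (n + 1), φ k| ≤ ((n:ℝ) + 1) * C := by
    calc |∑ k ∈ Finset.range (n + 1), φ k| ≤ ∑ k ∈ Finset.range (n + 1), |φ (k:ℤ)| :=
          Finset.abs_sum_le_sum_abs _ _
      _ ≤ ∑ _k ∈ Finset.range (n + 1), C := Finset.sum_le_sum fun k _ => hC k
      _ = ((n:ℝ) + 1) * C := by rw [Finset.sum_const, Finset.card_range, nsmul_eq_mul]; push_cast; ring
  rw [iavg, abs_div, abs_of_pos hpos, div_le_iff₀ hpos]
  linarith [h1]

/-- A fixed ultrafilter extending `atTop` on `ℕ`. -/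
def UF : Ultrafilter ℕ := Ultrafilter.of atTop

lemma UF_le : (UF : Filter ℕ) ≤ atTop := Ultrafilter.of_le _

/-- The invariant mean of a bounded `φ : ℤ → ℝ`. -/
def imean (φ : ℤ → ℝ) : ℝ := lim (Filter.map (iavg φ) (UF : Filter ℕ))

lemma tendsto_imean {φ : ℤ → ℝ} {C : ℝ} (hC : ∀ k : ℤ, |φ k| ≤ C) :
    Tendsto (iavg φ) (UF : Filter ℕ) (𝓝 (imean φ)) := by
  have hle : (UF.map (iavg φ) : Filter ℝ) ≤ 𝓟 (Set.Icc (-C) C) := by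
    rw [le_principal_iff]
    have : ∀ n, iavg φ n ∈ Set.Icc (-C) C := fun n => abs_le.mp (iavg_abs_le hC n)
    exact Filter.mem_map.mpr (Filter.univ_mem' this)
  obtain ⟨a, -, ha⟩ := isCompact_Icc.ultrafilter_le_nhds (UF.map (iavg φ)) hle
  exact le_nhds_lim ⟨a, ha⟩


lemma imean_add {φ ψ : ℤ → ℝ} {C D : ℝ} (hC : ∀ k : ℤ, |φ k| ≤ C) (hD : ∀ k : ℤ, |ψ k| ≤ D) :
    imean (fun k => φ k + ψ k) = imean φ + imean ψ := by
  have hb : ∀ k : ℤ, |φ k + ψ k| ≤ C + D := fun k =>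
    (abs_add_le _ _).trans (add_le_add (hC k) (hD k))
  have h1 : Tendsto (iavg fun k => φ k + ψ k) (UF : Filter ℕ) (𝓝 (imean φ + imean ψ)) := by
    have : (iavg fun k => φ k + ψ k) = fun n => iavg φ n + iavg ψ n := by
      funext n; simp [iavg, Finset.sum_add_distrib, add_div]
    rw [this]
    exact (tendsto_imean hC).add (tendsto_imean hD)
  exact tendsto_nhds_unique (tendsto_imean hb) h1

lemma imean_smul {φ : ℤ → ℝ} {C : ℝ} (c : ℝ) (hC : ∀ k : ℤ, |φ k| ≤ C) :
    imean (fun k => c * φ k) = c * imean φ := by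
  have hb : ∀ k : ℤ, |c * φ k| ≤ |c| * C := fun k => by
    rw [abs_mul]; exact mul_le_mul_of_nonneg_left (hC k) (abs_nonneg c)
  have h1 : Tendsto (iavg fun k => c * φ k) (UF : Filter ℕ) (𝓝 (c * imean φ)) := by
    have : (iavg fun k => c * φ k) = fun n => c * iavg φ n := by
      funext n; simp [iavg, ← Finset.mul_sum, mul_div_assoc]
    rw [this]
    exact (tendsto_imean hC).const_mul c
  exact tendsto_nhds_unique (tendsto_imean hb) h1

lemma imean_nonneg {φ : ℤ → ℝ} {C : ℝ} (hC : ∀ k : ℤ, |φ k| ≤ C) (h : ∀ k : ℤ, 0 ≤ φ k) :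
    0 ≤ imean φ := by
  refine ge_of_tendsto' (tendsto_imean hC) fun n => ?_
  exact div_nonneg (Finset.sum_nonneg fun k _ => h k) (by positivity)

lemma imean_const_one : imean (fun _ => (1:ℝ)) = 1 := by
  have hb : ∀ k : ℤ, |(1:ℝ)| ≤ (1:ℝ) := fun _ => by norm_num
  have h1 : Tendsto (iavg fun _ => (1:ℝ)) (UF : Filter ℕ) (𝓝 1) := by
    have : (iavg fun _ => (1:ℝ)) = fun _ => (1:ℝ) := by
      funext n
      have : ((n:ℝ) + 1) ≠ 0 := by positivity
      simp [iavg]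
      field_simp
      exact this
    rw [this]; exact tendsto_const_nhds
  exact tendsto_nhds_unique (tendsto_imean hb) h1

lemma imean_shift_one {φ : ℤ → ℝ} {C : ℝ} (hC : ∀ k : ℤ, |φ k| ≤ C) :
    imean (fun k => φ (1 + k)) = imean φ := by
  have hC' : ∀ k : ℤ, |φ (1 + k)| ≤ C := fun k => hC _
  have key : ∀ n : ℕ, (∑ k ∈ Finset.range (n + 1), φ (1 + (k:ℤ)))
      = (∑ k ∈ Finset.range (n + 1), φ k) + φ ((n:ℤ)+1) - φ 0 := by
    intro n
    induction n with
    | zero => simp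
    | succ m ih =>
      rw [Finset.sum_range_succ, ih, Finset.sum_range_succ (fun k : ℕ => φ (k:ℤ)) (m+1)]
      have e1 : (1 + ((m:ℕ)+1 : ℕ) : ℤ) = ((m:ℤ) + 1 + 1) := by push_cast; ring
      have e2 : (((m:ℕ)+1 : ℕ) : ℤ) = ((m:ℤ) + 1) := by push_cast; ring
      rw [e1, e2]; ring
  have hdiff : ∀ n : ℕ, iavg (fun k => φ (1 + k)) n - iavg φ n = (φ ((n:ℤ)+1) - φ 0) / ((n:ℝ)+1) := by
    intro n
    rw [iavg, iavg, key n, ← sub_div]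
    ring_nf
  have h0 : Tendsto (fun n : ℕ => iavg (fun k => φ (1 + k)) n - iavg φ n) atTop (𝓝 0) := by
    refine squeeze_zero_norm (a := fun n : ℕ => (2*C) / ((n:ℝ)+1)) (fun n => ?_) ?_
    · rw [hdiff n, Real.norm_eq_abs, abs_div, abs_of_pos (by positivity : (0:ℝ) < (n:ℝ)+1)]
      have : |φ ((n:ℤ)+1) - φ 0| ≤ 2 * C := by
        calc |φ ((n:ℤ)+1) - φ 0| ≤ |φ ((n:ℤ)+1)| + |φ 0| := abs_sub _ _
          _ ≤ C + C := add_le_add (hC _) (hC _)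
          _ = 2 * C := by ring
      exact div_le_div_of_nonneg_right this (by positivity)
    · have h2 : Tendsto (fun n : ℕ => (2*C) * (1/((n:ℝ)+1))) atTop (𝓝 ((2*C) * 0)) :=
        tendsto_one_div_add_atTop_nhds_zero_nat.const_mul _
      simpa [div_eq_mul_inv, one_div] using h2
  have h1 : Tendsto (fun n : ℕ => iavg (fun k => φ (1 + k)) n - iavg φ n)
      (UF : Filter ℕ) (𝓝 0) := h0.mono_left UF_le
  have h2 := (tendsto_imean hC).add h1
  simp only [add_sub_cancel, add_zero] at h2
  exact tendsto_nhds_unique (tendsto_imean hC')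
    (by simpa using h2 : Tendsto (iavg fun k => φ (1+k)) (UF : Filter ℕ) (𝓝 (imean φ)))


section MZsec

local notation "MZ" => Multiplicative ℤ

lemma amenable_multiplicative_int : Amenable (Multiplicative ℤ) := by
  letI : TopologicalSpace MZ := ⊥
  haveI : DiscreteTopology MZ := ⟨rfl⟩
  have bnd : ∀ (f : BoundedContinuousFunction MZ ℝ) (k : ℤ),
      |f (Multiplicative.ofAdd k)| ≤ ‖f‖ := fun f k => by
    rw [← Real.norm_eq_abs]; exact f.norm_coe_le_norm _
  refine ⟨{ toFun := fun f => imean (fun k => f (Multiplicative.ofAdd k))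
            map_add' := fun f g => ?_
            map_smul' := fun c f => ?_ }, fun f hf => ?_, ?_, ?_⟩
  · have := imean_add (bnd f) (bnd g)
    simpa using this
  · have := imean_smul c (bnd f)
    simpa using this
  · exact imean_nonneg (bnd f) fun k => hf _
  · simpa using imean_const_one
  · -- invariance
    set m : BoundedContinuousFunction MZ ℝ → ℝ :=
      fun f => imean (fun k => f (Multiplicative.ofAdd k)) with hm
    have hshift1 : ∀ f : BoundedContinuousFunction MZ ℝ, ∀ g : MZ,
        (fun k : ℤ => (f.compContinuous
            (⟨fun x => g * x, continuous_of_discreteTopology⟩ : C(MZ, MZ)))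
            (Multiplicative.ofAdd k))
          = fun k : ℤ => f (Multiplicative.ofAdd (g.toAdd + k)) := by
      intro f g; funext k; simp [BoundedContinuousFunction.coe_compContinuous]
    -- key: invariance for generator
    have hone : ∀ f : BoundedContinuousFunction MZ ℝ,
        m (f.compContinuous ⟨fun x => Multiplicative.ofAdd 1 * x,
            continuous_of_discreteTopology⟩) = m f := by
      intro f
      show imean _ = imean _
      rw [hshift1 f (Multiplicative.ofAdd 1)]
      exact imean_shift_one (bnd f)
    have hcomp : ∀ (a b : Multiplicative ℤ) (f : BoundedContinuousFunction MZ ℝ),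
        ((f.compContinuous ⟨fun x => b * x, continuous_of_discreteTopology⟩).compContinuous
          ⟨fun x => a * x, continuous_of_discreteTopology⟩)
        = f.compContinuous ⟨fun x => (b * a) * x, continuous_of_discreteTopology⟩ := by
      intro a b f; ext x
      simp [BoundedContinuousFunction.coe_compContinuous, mul_assoc]
    have hid : ∀ f : BoundedContinuousFunction MZ ℝ,
        f.compContinuous ⟨fun x => (1 : MZ) * x, continuous_of_discreteTopology⟩ = f := by
      intro f; ext x; simp [BoundedContinuousFunction.coe_compContinuous]
    have key : ∀ n : ℤ, ∀ f : BoundedContinuousFunction MZ ℝ,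
        m (f.compContinuous ⟨fun x => Multiplicative.ofAdd n * x,
            continuous_of_discreteTopology⟩) = m f := by
      have hneg : ∀ f : BoundedContinuousFunction MZ ℝ,
          m (f.compContinuous ⟨fun x => Multiplicative.ofAdd (-1) * x,
              continuous_of_discreteTopology⟩) = m f := by
        intro f
        have h1 := hone (f.compContinuous ⟨fun x => Multiplicative.ofAdd (-1) * x,
            continuous_of_discreteTopology⟩)
        rw [hcomp] at h1
        have : (Multiplicative.ofAdd (-1 : ℤ)) * Multiplicative.ofAdd (1 : ℤ) = 1 := by
          simp [← ofAdd_add]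
        rw [this, hid] at h1
        exact h1.symm
      intro n
      induction n using Int.induction_on with
      | zero => intro f; rw [show Multiplicative.ofAdd (0:ℤ) = 1 from rfl, hid]
      | succ k ih =>
        intro f
        have h1 := hone (f.compContinuous ⟨fun x => Multiplicative.ofAdd (k:ℤ) * x,
            continuous_of_discreteTopology⟩)
        rw [hcomp] at h1
        have : (Multiplicative.ofAdd (k:ℤ)) * Multiplicative.ofAdd (1:ℤ)
            = Multiplicative.ofAdd ((k:ℤ)+1) := by simp [← ofAdd_add]
        rw [this] at h1
        rw [h1, ih f]
      | pred k ih =>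
        intro f
        have h1 := hneg (f.compContinuous ⟨fun x => Multiplicative.ofAdd (-(k:ℤ)) * x,
            continuous_of_discreteTopology⟩)
        rw [hcomp] at h1
        have : (Multiplicative.ofAdd (-(k:ℤ))) * Multiplicative.ofAdd (-1:ℤ)
            = Multiplicative.ofAdd (-(k:ℤ)-1) := by rw [← ofAdd_add]; ring_nf
        rw [this] at h1
        rw [h1, ih f]
    intro g f
    exact key (Multiplicative.toAdd g) f

end MZsec

lemma Amenable.of_surjective {G H : Type*} [Group G] [Group H] (π : G →* H)
    (hπ : Function.Surjective π) (hG : Amenable G) : Amenable H := by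
  letI : TopologicalSpace G := ⊥
  haveI : DiscreteTopology G := ⟨rfl⟩
  letI : TopologicalSpace H := ⊥
  haveI : DiscreteTopology H := ⟨rfl⟩
  obtain ⟨m, hpos, hconst, hinv⟩ := hG
  let cπ : C(H, H) → C(G, G) := fun _ => ⟨id, continuous_of_discreteTopology⟩
  let Tπ : BoundedContinuousFunction H ℝ → BoundedContinuousFunction G ℝ :=
    fun f => f.compContinuous ⟨π, continuous_of_discreteTopology⟩
  refine ⟨{ toFun := fun f => m (Tπ f)
            map_add' := fun f g => ?_
            map_smul' := fun c f => ?_ }, fun f hf => ?_, ?_, ?_⟩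
  · have : Tπ (f + g) = Tπ f + Tπ g := by ext x; simp [Tπ]
    show m (Tπ (f + g)) = m (Tπ f) + m (Tπ g)
    rw [this, map_add]
  · have : Tπ (c • f) = c • Tπ f := by ext x; simp [Tπ]
    show m (Tπ (c • f)) = c • m (Tπ f)
    rw [this, map_smul]
  · exact hpos _ fun x => hf _
  · have : Tπ (BoundedContinuousFunction.const H 1) = BoundedContinuousFunction.const G 1 := by
      ext x; simp [Tπ]
    show m (Tπ _) = 1
    rw [this, hconst]
  · intro h f
    obtain ⟨g, rfl⟩ := hπ h
    have : Tπ (f.compContinuous ⟨fun x => π g * x, continuous_of_discreteTopology⟩)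
        = (Tπ f).compContinuous ⟨fun x => g * x, continuous_of_discreteTopology⟩ := by
      ext x; simp [Tπ, BoundedContinuousFunction.coe_compContinuous]
    show m (Tπ _) = m (Tπ f)
    rw [this, hinv g (Tπ f)]

lemma Amenable.of_finite (G : Type*) [Group G] [Finite G] : Amenable G := by
  letI : TopologicalSpace G := ⊥
  haveI : DiscreteTopology G := ⟨rfl⟩
  haveI := Fintype.ofFinite G
  have hcard : (0:ℝ) < (Fintype.card G : ℝ) := by
    have := Fintype.card_pos (α := G)
    positivity
  refine ⟨{ toFun := fun f => (∑ x, f x) / (Fintype.card G : ℝ)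
            map_add' := fun f g => ?_
            map_smul' := fun c f => ?_ }, fun f hf => ?_, ?_, ?_⟩
  · simp [Finset.sum_add_distrib, add_div]
  · simp [← Finset.mul_sum, mul_div_assoc]
  · exact div_nonneg (Finset.sum_nonneg fun x _ => hf x) hcard.le
  · simp
  · intro g f
    have : ∑ x, f (g * x) = ∑ x, f x := Fintype.sum_equiv (Equiv.mulLeft g) _ _ (fun x => rfl)
    show (∑ x, f (g * x)) / ((Fintype.card G : ℝ)) = (∑ x, f x) / ((Fintype.card G : ℝ))
    rw [this]

lemma Amenable.of_isCyclic (G : Type*) [Group G] (hc : IsCyclic G) : Amenable G := by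
  obtain ⟨g, hg⟩ := hc.exists_generator
  refine Amenable.of_surjective (zpowersHom G g) ?_ amenable_multiplicative_int
  intro x
  obtain ⟨k, hk⟩ := Subgroup.mem_zpowers_iff.mp (hg x)
  exact ⟨Multiplicative.ofAdd k, hk⟩

lemma Amenable.of_mulEquiv {G H : Type*} [Group G] [Group H] (e : G ≃* H)
    (hG : Amenable G) : Amenable H :=
  Amenable.of_surjective e.toMonoidHom e.surjective hG

end CyclicExtAux


section StepLemmas

open CyclicExtAux

variable {G Q : Type u} [Group G] [Group Q]

/-- For a surjective `φ : G →* Q` with kernel `N` and `H ≤ Q`, the preimage of `H`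
modulo `N` is isomorphic to `H`. -/
lemma quotSubgroupOfEquiv (φ : G →* Q) (hφ : Function.Surjective φ) (N : Subgroup G)
    [N.Normal] (hker : φ.ker = N) (H : Subgroup Q) :
    Nonempty ((↥(H.comap φ) ⧸ N.subgroupOf (H.comap φ)) ≃* ↥H) := by
  set K := H.comap φ with hK
  let ψ : ↥K →* Q := φ.comp K.subtype
  have hkerψ : ψ.ker = N.subgroupOf K := by
    ext x
    simp [ψ, MonoidHom.mem_ker, Subgroup.mem_subgroupOf, ← hker]
  have hrange : ψ.range = H := by
    rw [MonoidHom.range_comp, Subgroup.range_subtype, hK,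
      Subgroup.map_comap_eq_self_of_surjective hφ]
  exact ⟨(QuotientGroup.quotientMulEquivOfEq hkerψ.symm).trans
    ((QuotientGroup.quotientKerEquivRange ψ).trans (MulEquiv.subgroupCongr hrange))⟩

lemma ker_le_comap' (φ : G →* Q) (N : Subgroup G) (hker : φ.ker = N) (H : Subgroup Q) :
    N ≤ H.comap φ := by
  rw [← hker]
  intro g hg
  have : φ g = 1 := hg
  simp [Subgroup.mem_comap, this, one_mem]

lemma isCyclic_subgroupOf {N K : Subgroup G} (hcyc : IsCyclic ↥N) (hNK : N ≤ K) :
    IsCyclic ↥(N.subgroupOf K) :=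
  haveI := hcyc
  isCyclic_of_surjective (Subgroup.subgroupOfEquivOfLe hNK).symm
    (Subgroup.subgroupOfEquivOfLe hNK).symm.surjective

/-- The main induction step for a subgroup `H` of the quotient. -/
lemma inClassK_comap (N : Subgroup G) [N.Normal] (hcyc : IsCyclic ↥N)
    (φ : G →* Q) (hφ : Function.Surjective φ) (hker : φ.ker = N) (H : Subgroup Q)
    (ih : ∀ (G' : Type u) [Group G'] (N' : Subgroup G') [N'.Normal],
        IsCyclic ↥N' → (G' ⧸ N' ≃* ↥H) → InClassK G') :
    InClassK ↥(H.comap φ) := by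
  have hNK : N ≤ H.comap φ := ker_le_comap' φ N hker H
  obtain ⟨e⟩ := quotSubgroupOfEquiv φ hφ N hker H
  exact ih ↥(H.comap φ) (N.subgroupOf (H.comap φ)) (isCyclic_subgroupOf hcyc hNK) e

end StepLemmas


section FreeCase

open CyclicExtAux

/-- The free case: a cyclic-by-free group is in the class `𝒦`. -/
lemma inClassK_of_cyclic_by_free {G : Type u} [Group G] (N : Subgroup G) [N.Normal]
    (hcyc : IsCyclic ↥N) (hfree : IsFreeGroup (G ⧸ N)) : InClassK G := by
  haveI := hfree
  -- elements of `N` commute with each other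
  have hcomm : ∀ x y : G, x ∈ N → y ∈ N → x * y = y * x := by
    obtain ⟨g, hg⟩ := hcyc.exists_generator
    intro x y hx hy
    obtain ⟨m, hm⟩ := Subgroup.mem_zpowers_iff.mp (hg ⟨x, hx⟩)
    obtain ⟨k, hk⟩ := Subgroup.mem_zpowers_iff.mp (hg ⟨y, hy⟩)
    have h : (⟨x, hx⟩ : ↥N) * ⟨y, hy⟩ = ⟨y, hy⟩ * ⟨x, hx⟩ := by
      rw [← hm, ← hk, ← zpow_add, ← zpow_add, add_comm]
    exact congrArg Subtype.val h
  set C := Subgroup.centralizer (N : Set G) with hC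
  have hNC : N ≤ C := fun n hn => Subgroup.mem_centralizer_iff.mpr fun m hm => hcomm m n hm hn
  haveI hCn : C.Normal := by
    constructor
    intro c hc g
    rw [hC, Subgroup.mem_centralizer_iff] at hc ⊢
    intro n hn
    have hn' : g⁻¹ * n * g ∈ N := by
      have := ‹N.Normal›.conj_mem n hn g⁻¹
      simpa using this
    have hcn := hc _ hn'
    calc n * (g * c * g⁻¹) = g * (g⁻¹ * n * g * c) * g⁻¹ := by group
      _ = g * (c * (g⁻¹ * n * g)) * g⁻¹ := by rw [hcn]
      _ = g * c * g⁻¹ * n := by group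
  -- the quotient G / C is finite
  have hkerconj : (MulAut.conjNormal : G →* MulAut ↥N).ker = C := by
    ext g
    simp only [MonoidHom.mem_ker]
    constructor
    · intro h
      apply Subgroup.mem_centralizer_iff.mpr
      intro n hn
      have h1 : (MulAut.conjNormal g : MulAut ↥N) ⟨n, hn⟩ = ⟨n, hn⟩ := by rw [h]; rfl
      have h2 : g * n * g⁻¹ = n := by
        have := congrArg Subtype.val h1
        simpa [MulAut.conjNormal_apply] using this
      calc n * g = (g * n * g⁻¹) * g := by rw [h2]
        _ = g * n := by group
    · intro hg
      have hg' := Subgroup.mem_centralizer_iff.mp hg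
      apply MulEquiv.ext
      intro n
      apply Subtype.ext
      have h2 := hg' (n : G) n.2
      show g * (n : G) * g⁻¹ = (n : G)
      rw [← h2]; group
  haveI hfinAut : Finite (MulAut ↥N) := by
    have e1 : Multiplicative (ZMod (Nat.card ↥N)) ≃* ↥N := zmodCyclicMulEquiv hcyc
    have e2 : MulAut ↥N ≃ MulAut (Multiplicative (ZMod (Nat.card ↥N))) :=
      (MulAut.congr e1).toEquiv.symm
    have e3 : MulAut (Multiplicative (ZMod (Nat.card ↥N))) ≃
        ((ZMod (Nat.card ↥N)) ≃+ (ZMod (Nat.card ↥N))) := MulEquiv.toAdditive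
    have e4 : ((ZMod (Nat.card ↥N)) ≃+ (ZMod (Nat.card ↥N))) ≃ (ZMod (Nat.card ↥N))ˣ :=
      (ZMod.AddAutEquivUnits (Nat.card ↥N)).toEquiv
    exact Finite.of_equiv _ (e2.trans (e3.trans e4)).symm
  haveI hfinQ : Finite (G ⧸ C) := by
    have h1 : Finite (G ⧸ (MulAut.conjNormal : G →* MulAut ↥N).ker) :=
      Finite.of_equiv _ (QuotientGroup.quotientKerEquivRange _).symm.toEquiv
    rwa [hkerconj] at h1
  -- inside the centralizer
  let q0 : ↥C →* G ⧸ N := (QuotientGroup.mk' N).comp C.subtype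
  let F : Subgroup (G ⧸ N) := q0.range
  haveI : IsFreeGroup ↥F := inferInstance
  let qF : ↥C →* ↥F := q0.rangeRestrict
  have hqFsurj : Function.Surjective qF := q0.rangeRestrict_surjective
  have hkerqF : qF.ker = N.subgroupOf C := by
    rw [MonoidHom.ker_rangeRestrict]
    ext x
    simp [q0, MonoidHom.mem_ker, Subgroup.mem_subgroupOf, QuotientGroup.eq_one_iff]
  -- a splitting of qF
  let s : ↥F →* ↥C := IsFreeGroup.lift fun a => (hqFsurj (IsFreeGroup.of a)).choose
  have hsec : ∀ x, qF (s x) = x := by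
    have h : qF.comp s = MonoidHom.id ↥F := by
      apply IsFreeGroup.ext_hom
      intro a
      show qF (s (IsFreeGroup.of a)) = IsFreeGroup.of a
      rw [show s (IsFreeGroup.of a) = (hqFsurj (IsFreeGroup.of a)).choose from
        IsFreeGroup.lift_of _ _]
      exact (hqFsurj (IsFreeGroup.of a)).choose_spec
    intro x
    exact DFunLike.congr_fun h x
  have hsinj : Function.Injective s := fun x y hxy => by
    have h := congrArg qF hxy
    rwa [hsec, hsec] at h
  set K : Subgroup ↥C := s.range with hK
  haveI hKfree : IsFreeGroup ↥K := IsFreeGroup.ofMulEquiv (MonoidHom.ofInjective hsinj)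
  -- elements of N (inside C) are central in C
  have hcentral : ∀ n : ↥C, (n : G) ∈ N → ∀ c : ↥C, n * c = c * n := by
    intro n hn c
    apply Subtype.ext
    have h := Subgroup.mem_centralizer_iff.mp c.2 (n : G) hn
    exact h
  have hdecomp : ∀ c : ↥C, ((c * (s (qF c))⁻¹ : ↥C) : G) ∈ N := by
    intro c
    have h1 : qF (c * (s (qF c))⁻¹) = 1 := by
      rw [map_mul, map_inv, hsec]; group
    have h2 : c * (s (qF c))⁻¹ ∈ qF.ker := h1
    rw [hkerqF] at h2
    exact Subgroup.mem_subgroupOf.mp h2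
  haveI hKnormal : K.Normal := by
    constructor
    intro k hk c
    obtain ⟨x, rfl⟩ := hk
    set n := c * (s (qF c))⁻¹ with hn
    have hnN : ((n : ↥C) : G) ∈ N := hdecomp c
    have hcn : c = n * s (qF c) := by rw [hn]; group
    refine ⟨qF c * x * (qF c)⁻¹, ?_⟩
    have expand : s (qF c * x * (qF c)⁻¹) = s (qF c) * s x * (s (qF c))⁻¹ := by
      rw [map_mul, map_mul, map_inv]
    rw [expand]
    calc s (qF c) * s x * (s (qF c))⁻¹
        = n * (s (qF c) * s x * (s (qF c))⁻¹) * n⁻¹ := by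
          rw [hcentral n hnN (s (qF c) * s x * (s (qF c))⁻¹)]; group
      _ = (n * s (qF c)) * s x * (n * s (qF c))⁻¹ := by group
      _ = c * s x * c⁻¹ := by rw [← hcn]
  have hK'cyc : IsCyclic ↥(N.subgroupOf C) := isCyclic_subgroupOf hcyc hNC
  have hAmenCK : Amenable (↥C ⧸ K) := by
    refine Amenable.of_surjective ((QuotientGroup.mk' K).comp (N.subgroupOf C).subtype) ?_
      (Amenable.of_isCyclic _ hK'cyc)
    intro y
    obtain ⟨c, rfl⟩ := QuotientGroup.mk'_surjective K y
    refine ⟨⟨c * (s (qF c))⁻¹, Subgroup.mem_subgroupOf.mpr (hdecomp c)⟩, ?_⟩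
    show QuotientGroup.mk' K (c * (s (qF c))⁻¹) = QuotientGroup.mk' K c
    rw [QuotientGroup.mk'_eq_mk']
    exact ⟨s (qF c), ⟨qF c, rfl⟩, by group⟩
  have hInCK : InClassK (↥C) := InClassK.extension ↥C K (InClassK.free ↥K hKfree) hAmenCK
  exact InClassK.extension G C hInCK (Amenable.of_finite _)

end FreeCase

section MainInduction

open CyclicExtAux

lemma classK_main : ∀ (Q : Type u) [Group Q], InClassK Q →
    ∀ (G : Type u) [Group G] (N : Subgroup G) [N.Normal],
      IsCyclic ↥N → (G ⧸ N ≃* Q) → InClassK G := by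
  intro Q instQ h
  induction h with
  | free Q' hfr =>
    intro G _ N _ hcyc e
    haveI := hfr
    exact inClassK_of_cyclic_by_free N hcyc (IsFreeGroup.ofMulEquiv e.symm)
  | amenable Q' ham =>
    intro G _ N _ hcyc e
    exact InClassK.extension G N (InClassK.amenable ↥N (Amenable.of_isCyclic _ hcyc))
      (Amenable.of_mulEquiv e.symm ham)
  | directedUnion Q' S hdir hsup hmem ih =>
    intro G instG N instN hcyc e
    have hφsurj : Function.Surjective (e.toMonoidHom.comp (QuotientGroup.mk' N)) :=
      e.surjective.comp (QuotientGroup.mk'_surjective N)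
    set φ : G →* Q' := e.toMonoidHom.comp (QuotientGroup.mk' N) with hφ
    have hφker : φ.ker = N := by
      ext g
      simp [hφ, MonoidHom.mem_ker, QuotientGroup.eq_one_iff]
    rcases S.eq_empty_or_nonempty with hS | hS
    · have hbot : (⊥ : Subgroup Q') = ⊤ := by rwa [hS, sSup_empty] at hsup
      have hq : ∀ q : Q', q = 1 := fun q =>
        Subgroup.mem_bot.mp (hbot ▸ Subgroup.mem_top q)
      haveI : Subsingleton Q' := ⟨fun a b => by rw [hq a, hq b]⟩
      exact InClassK.extension G N (InClassK.amenable ↥N (Amenable.of_isCyclic _ hcyc))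
        (Amenable.of_mulEquiv e.symm (Amenable.of_finite Q'))
    · obtain ⟨H0, hH0⟩ := hS
      set S' : Set (Subgroup G) := (fun H => H.comap φ) '' S with hS'
      refine InClassK.directedUnion G S' ?_ ?_ ?_
      · rintro _ ⟨H1, h1, rfl⟩ _ ⟨H2, h2, rfl⟩
        obtain ⟨H3, h3, h13, h23⟩ := hdir H1 h1 H2 h2
        exact ⟨H3.comap φ, ⟨H3, h3, rfl⟩, Subgroup.comap_mono h13, Subgroup.comap_mono h23⟩
      · have h1 : sSup S ≤ Subgroup.map φ (sSup S') := by
          apply sSup_le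
          intro H hH
          have hHeq : H = Subgroup.map φ (H.comap φ) :=
            (Subgroup.map_comap_eq_self_of_surjective hφsurj H).symm
          rw [hHeq]
          exact Subgroup.map_mono (le_sSup ⟨H, hH, rfl⟩)
        have h2 : Subgroup.map φ (sSup S') = ⊤ := top_le_iff.mp (hsup ▸ h1)
        have h3 := Subgroup.comap_map_eq (f := φ) (sSup S')
        rw [h2, Subgroup.comap_top, hφker] at h3
        have h4 : N ≤ sSup S' :=
          le_trans (ker_le_comap' φ N hφker H0) (le_sSup ⟨H0, hH0, rfl⟩)
        rw [sup_eq_left.mpr h4] at h3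
        exact h3.symm
      · rintro _ ⟨H, hH, rfl⟩
        exact inClassK_comap N hcyc φ hφsurj hφker H (ih H hH)
  | extension Q' M hM hamen ih =>
    intro G instG N instN hcyc e
    have hφsurj : Function.Surjective (e.toMonoidHom.comp (QuotientGroup.mk' N)) :=
      e.surjective.comp (QuotientGroup.mk'_surjective N)
    set φ : G →* Q' := e.toMonoidHom.comp (QuotientGroup.mk' N) with hφ
    have hφker : φ.ker = N := by
      ext g
      simp [hφ, MonoidHom.mem_ker, QuotientGroup.eq_one_iff]
    haveI : (M.comap φ).Normal := Subgroup.Normal.comap ‹M.Normal› φ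
    have h1 : InClassK ↥(M.comap φ) := inClassK_comap N hcyc φ hφsurj hφker M ih
    have h2 : Amenable (G ⧸ M.comap φ) := by
      have hker2 : ((QuotientGroup.mk' M).comp φ).ker = M.comap φ := by
        ext g
        simp [MonoidHom.mem_ker, QuotientGroup.eq_one_iff, Subgroup.mem_comap]
      have e2 : (G ⧸ M.comap φ) ≃* (Q' ⧸ M) :=
        (QuotientGroup.quotientMulEquivOfEq hker2.symm).trans
          (QuotientGroup.quotientKerEquivOfSurjective _
            ((QuotientGroup.mk'_surjective M).comp hφsurj))
      exact Amenable.of_mulEquiv e2.symm hamen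
    exact InClassK.extension G (M.comap φ) h1 h2
  | iso Q1 Q2 eQ h ihiso =>
    intro G _ N _ hcyc e
    exact ihiso G N hcyc (e.trans eQ.symm)

end MainInduction

/-- **The class `𝒦` is closed under extensions with cyclic kernel:** if
`1 → A → G → H → 1` is a short exact sequence (realized by a normal subgroup
`N ≤ G` with `G/N ∈ 𝒦`) with cyclic kernel `N`, then `G ∈ 𝒦`. -/
theorem classK_closed_under_cyclic_extension :
    ∀ (G : Type u) [Group G] (N : Subgroup G) [N.Normal],
      IsCyclic ↥N → InClassK (G ⧸ N) → InClassK G := by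
  intro G _ N _ hcyc h
  exact classK_main (G ⧸ N) h G N hcyc (MulEquiv.refl _)
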